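/- Suppose f(x,u) = g(h(x,u)) where: f is μ-strongly convex in x; g is L₂-smooth with minimum f⋆ equal to the global minimum of f; h is G₁-Lipschitz in u; and min_x f(x,u) = f⋆ for each u in the considered region. Then ‖∇₂f(x,u)‖² ≤ (G₁² L₂ / μ) ‖∇₁f(x,u)‖² for all x, u in the region (gradient dominance of the first block over the second). -/

import Mathlib

open scoped RealInnerProductSpace

-- norm of gradient equals norm of fderiv
lemma norm_gradient_eq_norm_fderiv {F : Type*} [NormedAddCommGroup F] [InnerProductSpace ℝ F]
    [CompleteSpace F] (f : F → ℝ) (x : F) : ‖gradient f x‖ = ‖fderiv ℝ f x‖ := by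
  rw [gradient]
  exact (InnerProductSpace.toDual ℝ F).symm.norm_map _

-- PL from strong convexity + optimality
lemma pl_aux {E : Type*} [NormedAddCommGroup E] [InnerProductSpace ℝ E] [CompleteSpace E]
    (f : E → ℝ) (μ fstar : ℝ) (hμ : 0 < μ)
    (hsc : ∀ x y : E, f x + ⟪gradient f x, y - x⟫ + μ / 2 * ‖y - x‖ ^ 2 ≤ f y)
    (hopt : IsGLB (Set.range f) fstar) (x : E) :
    2 * μ * (f x - fstar) ≤ ‖gradient f x‖ ^ 2 := by
  have hlb : f x - ‖gradient f x‖ ^ 2 / (2 * μ) ∈ lowerBounds (Set.range f) := by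
    rintro _ ⟨y, rfl⟩
    have h1 := hsc x y
    have h2 : ⟪gradient f x, y - x⟫ ≥ -(‖gradient f x‖ * ‖y - x‖) := by
      have := abs_real_inner_le_norm (gradient f x) (y - x)
      cases abs_le.mp this with
      | intro a b => linarith
    have hμ' : (0:ℝ) < 2 * μ := by linarith
    have key : ‖gradient f x‖ * ‖y - x‖ - μ / 2 * ‖y - x‖ ^ 2 ≤ ‖gradient f x‖ ^ 2 / (2 * μ) := by
      rw [sub_le_iff_le_add, ← sub_le_iff_le_add']
      rw [sub_div' (ne_of_gt hμ'), div_le_iff₀ hμ']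
      nlinarith [sq_nonneg (‖gradient f x‖ - μ * ‖y - x‖)]
    linarith
  have hle := hopt.2 hlb
  have hμ' : (0:ℝ) < 2 * μ := by linarith
  have h3 : f x - fstar ≤ ‖gradient f x‖ ^ 2 / (2 * μ) := by linarith
  rw [le_div_iff₀ hμ'] at h3
  linarith

-- PL-type bound from smoothness + lower bound
lemma smooth_aux {G : Type*} [NormedAddCommGroup G] [InnerProductSpace ℝ G] [CompleteSpace G]
    (g : G → ℝ) (L2 fstar : ℝ) (hL2 : 0 < L2)
    (hgsm : ∀ s1 s2 : G, g s2 ≤ g s1 + ⟪gradient g s1, s2 - s1⟫ + L2 / 2 * ‖s2 - s1‖ ^ 2)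
    (hglb : ∀ s : G, fstar ≤ g s) (s : G) :
    ‖gradient g s‖ ^ 2 ≤ 2 * L2 * (g s - fstar) := by
  set gs := gradient g s with hgs
  have h1 := hgsm s (s - (1 / L2) • gs)
  have h2 : (s - (1 / L2) • gs) - s = -((1 / L2) • gs) := by abel
  rw [h2] at h1
  have h3 : ⟪gs, -((1 / L2) • gs)⟫ = -(1 / L2 * ‖gs‖ ^ 2) := by
    rw [inner_neg_right, real_inner_smul_right, real_inner_self_eq_norm_sq]
  have h4 : ‖-((1 / L2) • gs)‖ ^ 2 = (1 / L2) ^ 2 * ‖gs‖ ^ 2 := by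
    rw [norm_neg, norm_smul, mul_pow, Real.norm_eq_abs]
    congr 1
    rw [sq_abs]
  rw [h3, h4] at h1
  have h5 := hglb (s - (1 / L2) • gs)
  have hL2' : L2 ≠ 0 := ne_of_gt hL2
  have key : L2 / 2 * ((1 / L2) ^ 2 * ‖gs‖ ^ 2) = 1 / (2 * L2) * ‖gs‖ ^ 2 := by
    field_simp
  rw [key] at h1
  have : fstar ≤ g s - 1 / L2 * ‖gs‖ ^ 2 + 1 / (2 * L2) * ‖gs‖ ^ 2 := le_trans h5 h1
  have hfin : 1 / (2 * L2) * ‖gs‖ ^ 2 ≤ g s - fstar := by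
    have : 1 / L2 * ‖gs‖ ^ 2 - 1 / (2 * L2) * ‖gs‖ ^ 2 = 1 / (2 * L2) * ‖gs‖ ^ 2 := by
      field_simp; ring
    linarith
  have h2L : (0:ℝ) < 2 * L2 := by linarith
  rw [div_mul_eq_mul_div, one_mul, div_le_iff₀ h2L] at hfin
  linarith

/-- Gradient dominance of the first block over the second for f(x,u) = g(h(x,u)). -/
theorem stmt5 {E F G : Type*} [NormedAddCommGroup E] [InnerProductSpace ℝ E] [CompleteSpace E]
    [NormedAddCommGroup F] [InnerProductSpace ℝ F] [CompleteSpace F]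
    [NormedAddCommGroup G] [InnerProductSpace ℝ G] [CompleteSpace G]
    (g : G → ℝ) (h : E → F → G) (μ L2 G1 fstar : ℝ)
    (hμ : 0 < μ) (hL2 : 0 < L2) (hG1 : 0 ≤ G1)
    (hgdiff : Differentiable ℝ g)
    (hhdiff : ∀ x : E, Differentiable ℝ (h x))
    (hsc : ∀ (u : F) (x y : E),
      g (h x u) + ⟪gradient (fun x' => g (h x' u)) x, y - x⟫ + μ / 2 * ‖y - x‖ ^ 2
        ≤ g (h y u))
    (hgsm : ∀ s1 s2 : G, g s2 ≤ g s1 + ⟪gradient g s1, s2 - s1⟫ + L2 / 2 * ‖s2 - s1‖ ^ 2)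
    (hglb : ∀ s : G, fstar ≤ g s)
    (hlip : ∀ (x : E) (u v : F), ‖h x u - h x v‖ ≤ G1 * ‖u - v‖)
    (hopt : ∀ u : F, IsGLB (Set.range fun x => g (h x u)) fstar) :
    ∀ (x : E) (u : F),
      ‖gradient (fun u' => g (h x u')) u‖ ^ 2 ≤
        G1 ^ 2 * L2 / μ * ‖gradient (fun x' => g (h x' u)) x‖ ^ 2 := by
  intro x u
  set s := h x u with hs
  set gs := gradient g s with hgsdef
  set gu := gradient (fun u' => g (h x u')) u with hgudef
  set gx := gradient (fun x' => g (h x' u)) x with hgxdef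
  -- PL inequality
  have hPL : 2 * μ * (g s - fstar) ≤ ‖gx‖ ^ 2 :=
    pl_aux (fun x' => g (h x' u)) μ fstar hμ (hsc u) (hopt u) x
  -- smoothness bound
  have hSM : ‖gs‖ ^ 2 ≤ 2 * L2 * (g s - fstar) := smooth_aux g L2 fstar hL2 hgsm hglb s
  -- chain rule bound: ‖gu‖ ≤ G1 * ‖gs‖
  have hlipW : LipschitzWith ⟨G1, hG1⟩ (h x) := by
    apply LipschitzWith.of_dist_le_mul
    intro u v
    rw [dist_eq_norm, dist_eq_norm]
    exact hlip x u v
  have hD : ‖fderiv ℝ (h x) u‖ ≤ G1 :=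
    norm_fderiv_le_of_lipschitz ℝ hlipW
  have hcomp : fderiv ℝ (fun u' => g (h x u')) u =
      (fderiv ℝ g s).comp (fderiv ℝ (h x) u) :=
    fderiv_comp u (hgdiff s) ((hhdiff x) u)
  have hnorm : ‖gu‖ ≤ G1 * ‖gs‖ := by
    rw [hgudef, norm_gradient_eq_norm_fderiv, hcomp]
    calc ‖(fderiv ℝ g s).comp (fderiv ℝ (h x) u)‖
        ≤ ‖fderiv ℝ g s‖ * ‖fderiv ℝ (h x) u‖ := ContinuousLinearMap.opNorm_comp_le _ _
      _ ≤ ‖fderiv ℝ g s‖ * G1 := by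
          exact mul_le_mul_of_nonneg_left hD (norm_nonneg _)
      _ = G1 * ‖gs‖ := by
          rw [hgsdef, norm_gradient_eq_norm_fderiv, mul_comm]
  have hsq : ‖gu‖ ^ 2 ≤ G1 ^ 2 * ‖gs‖ ^ 2 := by
    have := pow_le_pow_left₀ (norm_nonneg gu) hnorm 2
    rwa [mul_pow] at this
  rw [div_mul_eq_mul_div, le_div_iff₀ hμ]
  have a1 : ‖gu‖ ^ 2 * μ ≤ G1 ^ 2 * ‖gs‖ ^ 2 * μ := mul_le_mul_of_nonneg_right hsq hμ.le
  have a2 : G1 ^ 2 * ‖gs‖ ^ 2 * μ ≤ G1 ^ 2 * (2 * L2 * (g s - fstar)) * μ :=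
    mul_le_mul_of_nonneg_right (mul_le_mul_of_nonneg_left hSM (sq_nonneg G1)) hμ.le
  have a3 : G1 ^ 2 * (2 * L2 * (g s - fstar)) * μ = G1 ^ 2 * L2 * (2 * μ * (g s - fstar)) := by ring
  have a4 : G1 ^ 2 * L2 * (2 * μ * (g s - fstar)) ≤ G1 ^ 2 * L2 * ‖gx‖ ^ 2 :=
    mul_le_mul_of_nonneg_left hPL (by positivity)
  linarith
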